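/- Let L be a field, D an L-vector space of dimension d, F^• a filtration of D of type μ = (μ_1,…,μ_d) (μ nonincreasing), and D' ⊆ D a subspace of dimension d'. Assume the filtration is transverse to D', i.e. dim(F^i ∩ D') = max(0, dim F^i − (d − d')) for all i ∈ ℤ. Then the induced filtration F^i ∩ D' on D' has type (μ_{d−d'+1},…,μ_d), i.e. for every i ∈ ℤ the dimension of the i-th graded piece of the induced filtration equals #{j : d−d' < j ≤ d and μ_j = i}. -/

import Mathlib

open Module

section auxx
lemma aux_initial {d : ℕ} (T : Finset (Fin d))
    (h : ∀ j j' : Fin d, j ≤ j' → j' ∈ T → j ∈ T) (j : Fin d) :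
    j ∈ T ↔ (j : ℕ) < T.card := by
  constructor
  · intro hj
    have hsub : Finset.Iic j ⊆ T := fun j' hj' => h j' j (Finset.mem_Iic.mp hj') hj
    have := Finset.card_le_card hsub
    rw [Fin.card_Iic] at this
    omega
  · intro hc
    by_contra hj
    have hsub : T ⊆ Finset.Iio j := by
      intro j' hj'
      rw [Finset.mem_Iio]
      by_contra hlt
      exact hj (h j j' (not_lt.mp hlt) hj')
    have := Finset.card_le_card hsub
    rw [Fin.card_Iio] at this
    omega

lemma aux_card_filter_fin (d : ℕ) (P : ℕ → Prop) [DecidablePred P] :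
    (Finset.univ.filter fun j : Fin d => P j.val).card = ((Finset.range d).filter P).card := by
  rw [← Finset.card_image_of_injective _ Fin.val_injective]
  congr 1
  ext n
  simp only [Finset.mem_image, Finset.mem_filter, Finset.mem_univ, true_and, Finset.mem_range]
  constructor
  · rintro ⟨j, hj, rfl⟩; exact ⟨j.isLt, hj⟩
  · rintro ⟨hn, hp⟩; exact ⟨⟨n, hn⟩, hp, rfl⟩

lemma aux_card_interval (d a b : ℕ) (hb : b ≤ d) :
    ((Finset.range d).filter fun n => a ≤ n ∧ n < b).card = b - a := by
  have : ((Finset.range d).filter fun n => a ≤ n ∧ n < b) = Finset.Ico a b := by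
    ext n
    simp only [Finset.mem_filter, Finset.mem_range, Finset.mem_Ico]
    omega
  rw [this, Nat.card_Ico]
end auxx

noncomputable section

variable (L : Type*) [Field L] (D : Type*) [AddCommGroup D] [Module L D]

/-- A decreasing, exhaustive and separated `ℤ`-indexed filtration by subspaces. -/
def IsFiltrationOfSubmodules (F : ℤ → Submodule L D) : Prop :=
  Antitone F ∧ (∀ x : D, ∃ i : ℤ, x ∈ F i) ∧ (∀ x : D, (∀ i : ℤ, x ∈ F i) → x = 0)

/-- The filtration `F` is of type `μ`: the `i`-th graded piece `F i / F (i+1)` has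
dimension `#{j | μ j = i}`. -/
def FiltrationOfType {d : ℕ} (F : ℤ → Submodule L D) (μ : Fin d → ℤ) : Prop :=
  IsFiltrationOfSubmodules L D F ∧
    ∀ i : ℤ, finrank L (F i) =
      finrank L (F (i + 1)) + (Finset.univ.filter fun j : Fin d => μ j = i).card

/-- **Lemma 1.2** (Fontaine–Rapoport). If a filtration `F` of type `μ` on a `d`-dimensional
space `D` is transverse to a `d'`-dimensional subspace `D'`, i.e.
`dim (F^i ∩ D') = max 0 (dim F^i - (d - d'))` for all `i`, then the induced filtration
`(F^i ∩ D')` on `D'` has type `(μ_{d-d'+1}, …, μ_d)`: its `i`-th graded piece has dimension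
`#{j | d - d' < j ≤ d, μ j = i}`. -/
theorem induced_filtration_type_of_transverse
    [FiniteDimensional L D] (d : ℕ) (hD : finrank L D = d)
    (F : ℤ → Submodule L D) (μ : Fin d → ℤ) (hμ : Antitone μ)
    (htype : FiltrationOfType L D F μ)
    (D' : Submodule L D) (d' : ℕ) (hd' : finrank L D' = d')
    (htrans : ∀ i : ℤ, (finrank L (F i ⊓ D' : Submodule L D) : ℤ) =
      max 0 ((finrank L (F i) : ℤ) - ((d : ℤ) - (d' : ℤ)))) :
    ∀ i : ℤ, finrank L (F i ⊓ D' : Submodule L D) =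
      finrank L (F (i + 1) ⊓ D' : Submodule L D) +
        (Finset.univ.filter fun j : Fin d => d - d' ≤ (j : ℕ) ∧ μ j = i).card := by
  obtain ⟨⟨hFanti, _hexh, hsep⟩, hstep⟩ := htype
  have hfle : ∀ i : ℤ, finrank L (F i) ≤ d := fun i => hD ▸ Submodule.finrank_le (F i)
  have hd'le : d' ≤ d := by rw [← hD, ← hd']; exact Submodule.finrank_le D'
  obtain ⟨M, hM⟩ : ∃ M : ℤ, ∀ j : Fin d, μ j ≤ M := Finite.exists_le μ
  have hconst : ∀ i : ℤ, M + 1 ≤ i → F i = F (M + 1) := by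
    refine fun i hi => Int.le_induction (motive := fun i _ => F i = F (M + 1)) rfl ?_ i hi
    intro n hn ih
    have hcz : (Finset.univ.filter fun j : Fin d => μ j = n).card = 0 := by
      rw [Finset.card_eq_zero, Finset.filter_eq_empty_iff]
      intro j _
      have := hM j
      omega
    have heq := hstep n
    rw [hcz] at heq
    have hle : F (n + 1) ≤ F n := hFanti (by omega)
    have : F (n + 1) = F n :=
      Submodule.eq_of_le_of_finrank_le hle (by omega)
    rw [this, ih]
  have hbot : F (M + 1) = ⊥ := by
    rw [eq_bot_iff]
    intro x hx
    rw [Submodule.mem_bot]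
    apply hsep
    intro i
    rcases le_or_gt i (M + 1) with h | h
    · exact hFanti h hx
    · rw [hconst i (by omega)]; exact hx
  have hfbot : finrank L (F (M + 1)) = 0 := by rw [hbot]; exact finrank_bot L D
  have hkey : ∀ i : ℤ, finrank L (F i) =
      (Finset.univ.filter fun j : Fin d => i ≤ μ j).card := by
    have hstep' : ∀ n : ℤ,
        (Finset.univ.filter fun j : Fin d => n - 1 ≤ μ j).card =
        (Finset.univ.filter fun j : Fin d => n ≤ μ j).card +
        (Finset.univ.filter fun j : Fin d => μ j = n - 1).card := by
      intro n
      rw [← Finset.card_union_of_disjoint]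
      · congr 1
        ext j
        simp only [Finset.mem_union, Finset.mem_filter, Finset.mem_univ, true_and]
        omega
      · rw [Finset.disjoint_filter]
        intro j _ h1 h2
        omega
    have hbase : (Finset.univ.filter fun j : Fin d => M + 1 ≤ μ j).card = 0 := by
      rw [Finset.card_eq_zero, Finset.filter_eq_empty_iff]
      intro j _
      have := hM j
      omega
    intro i
    rcases le_or_gt i (M + 1) with h | h
    · refine Int.le_induction_down (motive := fun i _ => finrank L (F i) =
        (Finset.univ.filter fun j : Fin d => i ≤ μ j).card) ?_ ?_ i h
      · show finrank L (F (M + 1)) =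
          (Finset.univ.filter fun j : Fin d => (M + 1 : ℤ) ≤ μ j).card
        rw [hfbot, hbase]
      · intro n hn ih
        have ih' : finrank L (F n) =
            (Finset.univ.filter fun j : Fin d => n ≤ μ j).card := ih
        show finrank L (F (n - 1)) =
          (Finset.univ.filter fun j : Fin d => n - 1 ≤ μ j).card
        have h1 := hstep (n - 1)
        have h2 : ((n : ℤ) - 1) + 1 = n := by ring
        rw [h2] at h1
        rw [h1, hstep' n, ih']
    · have hFi : F i = F (M + 1) := hconst i (by omega)
      have hz : finrank L (F i) = 0 := by rw [hFi, hbot]; exact finrank_bot L D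
      have hc : (Finset.univ.filter fun j : Fin d => i ≤ μ j).card = 0 := by
        rw [Finset.card_eq_zero, Finset.filter_eq_empty_iff]
        intro j _
        have := hM j
        omega
      rw [hz, hc]
  have hmem : ∀ (i : ℤ) (j : Fin d), i ≤ μ j ↔ (j : ℕ) < finrank L (F i) := by
    intro i j
    rw [hkey i]
    have h0 : ∀ a b : Fin d, a ≤ b →
        b ∈ (Finset.univ.filter fun j : Fin d => i ≤ μ j) →
        a ∈ (Finset.univ.filter fun j : Fin d => i ≤ μ j) := by
      intro a b hab hb
      simp only [Finset.mem_filter, Finset.mem_univ, true_and] at *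
      exact le_trans hb (hμ hab)
    have h1 := aux_initial _ h0 j
    simpa only [Finset.mem_filter, Finset.mem_univ, true_and] using h1
  intro i
  have hmu : ∀ j : Fin d, μ j = i ↔
      (finrank L (F (i + 1)) ≤ (j : ℕ) ∧ (j : ℕ) < finrank L (F i)) := by
    intro j
    have h1 := hmem i j
    have h2 := hmem (i + 1) j
    omega
  have hcard : (Finset.univ.filter fun j : Fin d => d - d' ≤ (j : ℕ) ∧ μ j = i).card =
      finrank L (F i) - max (d - d') (finrank L (F (i + 1))) := by
    have he : (Finset.univ.filter fun j : Fin d => d - d' ≤ (j : ℕ) ∧ μ j = i) =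
        (Finset.univ.filter fun j : Fin d =>
          max (d - d') (finrank L (F (i + 1))) ≤ (j : ℕ) ∧ (j : ℕ) < finrank L (F i)) := by
      apply Finset.filter_congr
      intro j _
      have h1 := hmu j
      have hm1 : d - d' ≤ max (d - d') (finrank L (F (i + 1))) := le_max_left _ _
      have hm2 : finrank L (F (i + 1)) ≤ max (d - d') (finrank L (F (i + 1))) :=
        le_max_right _ _
      have hm3 := max_choice (d - d') (finrank L (F (i + 1)))
      rcases hm3 with hm3 | hm3 <;> rw [hm3] at hm1 hm2 ⊢ <;> omega
    rw [he, aux_card_filter_fin d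
      (fun n => max (d - d') (finrank L (F (i + 1))) ≤ n ∧ n < finrank L (F i)),
      aux_card_interval d _ _ (hfle i)]
  have hfmono : finrank L (F (i + 1)) ≤ finrank L (F i) := by have := hstep i; omega
  have t1 := htrans i
  have t2 := htrans (i + 1)
  have m1 := max_choice (0 : ℤ) ((finrank L (F i) : ℤ) - ((d : ℤ) - (d' : ℤ)))
  have m2 := max_choice (0 : ℤ) ((finrank L (F (i + 1)) : ℤ) - ((d : ℤ) - (d' : ℤ)))
  have l1 := le_max_right (0 : ℤ) ((finrank L (F i) : ℤ) - ((d : ℤ) - (d' : ℤ)))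
  have l2 := le_max_right (0 : ℤ) ((finrank L (F (i + 1)) : ℤ) - ((d : ℤ) - (d' : ℤ)))
  rw [← t1] at l1 m1
  rw [← t2] at l2 m2
  rw [hcard]
  have hfi := hfle i
  rcases le_total (d - d') (finrank L (F (i + 1))) with hc | hc
  · rw [max_eq_right hc]
    rcases m1 with m1 | m1 <;> rcases m2 with m2 | m2 <;> omega
  · rw [max_eq_left hc]
    rcases m1 with m1 | m1 <;> rcases m2 with m2 | m2 <;> omega
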